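/- For n ≥ 3 there is no universal cycle over the alphabet {1,...,n} for the permutations of length n; that is, no word w of length n! over {1,...,n} has the property that every permutation of length n occurs as a cyclic factor of w. -/

import Mathlib

/-- `w` is a permutation of length `n`: a word on `{1,...,n}` with each letter occurring once. -/
def IsPermWord (n : Nat) (w : List Nat) : Prop :=
  w.length = n ∧ w.Nodup ∧ ∀ x ∈ w, 1 ≤ x ∧ x ≤ n

private lemma cons_perm_cons_eq {a b : Nat} {t : List Nat} (h : (a :: t).Perm (b :: t)) :
    a = b := by
  by_contra hne
  have h1 := h.count_eq a
  simp [List.count_cons, hne, Ne.symm hne] at h1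

private lemma perm_range' {n : Nat} {p : List Nat} (h : IsPermWord n p) :
    p.Perm (List.range' 1 n) := by
  obtain ⟨hlen, hnd, hmem⟩ := h
  have hsub : p ⊆ List.range' 1 n := by
    intro x hx
    have := hmem x hx
    simp [List.mem_range'_1]
    omega
  exact (List.subperm_of_subset hnd hsub).perm_of_length_le (by simp [hlen])

/-- For n ≥ 3 there is no universal cycle over the alphabet {1,...,n} for the
permutations of length n. -/
theorem no_universal_cycle_over_n (n : Nat) (hn : 3 ≤ n) :
    ¬ ∃ w : List Nat, w.length = n.factorial ∧ (∀ x ∈ w, 1 ≤ x ∧ x ≤ n) ∧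
      ∀ p : List Nat, IsPermWord n p → p <:+: (w ++ w.take (n - 1)) := by
  classical
  rintro ⟨w, hwlen, halph, huniv⟩
  have hNn : n < n.factorial := Nat.lt_factorial_self hn
  set N := n.factorial with hN
  set v := w ++ w.take (n - 1) with hv
  have hvlen : v.length = N + (n - 1) := by
    simp [hv, hwlen]
    omega
  set win : Nat → List Nat := fun i => (v.drop i).take n with hwin
  -- every permutation word occurs as a window at some index < N
  have happ : ∀ p : List Nat, IsPermWord n p → ∃ i, i < N ∧ win i = p := by
    intro p hp
    obtain ⟨s, t, hst⟩ := huniv p hp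
    refine ⟨s.length, ?_, ?_⟩
    · have hvl : v.length = s.length + p.length + t.length := by
        rw [← hst]; simp; omega
      have hp1 := hp.1
      omega
    · have hdrop : v.drop s.length = p ++ t := by
        rw [← hst, List.append_assoc, List.drop_left]
      simp only [hwin]
      rw [hdrop, ← hp.1, List.take_left]
  set L := List.range' 1 n with hLdef
  have hLnd : L.Nodup := by
    rw [hLdef]; exact List.nodup_range'
  set S : Finset (List Nat) := L.permutations.toFinset with hS
  have hSmem : ∀ p, p ∈ S ↔ IsPermWord n p := by
    intro p
    rw [hS, List.mem_toFinset, List.mem_permutations]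
    constructor
    · intro hperm
      refine ⟨by rw [hperm.length_eq]; simp [hLdef], hperm.nodup_iff.mpr hLnd, ?_⟩
      intro x hx
      have := hperm.mem_iff.mp hx
      rw [hLdef, List.mem_range'_1] at this
      omega
    · exact perm_range'
  have hScard : S.card = N := by
    rw [hS, List.toFinset_card_of_nodup (List.nodup_permutations _ hLnd)]
    rw [hLdef, List.length_permutations, List.length_range', hN]
  set g : List Nat → Nat := fun p => if h : IsPermWord n p then (happ p h).choose else 0
    with hg
  have hg1 : ∀ p (h : IsPermWord n p), g p < N ∧ win (g p) = p := by
    intro p h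
    simp only [hg, dif_pos h]
    exact ⟨(happ p h).choose_spec.1, (happ p h).choose_spec.2⟩
  have hinj : Set.InjOn g S := by
    intro p hp q hq he
    rw [← (hg1 p ((hSmem p).1 hp)).2, ← (hg1 q ((hSmem q).1 hq)).2, he]
  have himg : S.image g = Finset.range N := by
    apply Finset.eq_of_subset_of_card_le
    · intro i hi
      simp only [Finset.mem_image] at hi
      obtain ⟨p, hp, rfl⟩ := hi
      exact Finset.mem_range.2 (hg1 p ((hSmem p).1 hp)).1
    · rw [Finset.card_range, Finset.card_image_of_injOn hinj, hScard]
  have hwinperm : ∀ i, i < N → IsPermWord n (win i) := by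
    intro i hi
    have hmem : i ∈ S.image g := by rw [himg]; exact Finset.mem_range.2 hi
    simp only [Finset.mem_image] at hmem
    obtain ⟨p, hp, hgp⟩ := hmem
    have h := (hSmem p).1 hp
    rw [← hgp, (hg1 p h).2]
    exact h
  -- periodicity with period n
  have hper : ∀ i, i + 1 < N → ∀ (h1 : i < v.length) (h2 : i + n < v.length),
      v[i] = v[i + n] := by
    intro i hi h1 h2
    have hpi := hwinperm i (by omega)
    have hpi1 := hwinperm (i + 1) hi
    have e1 : win i = v[i] :: (v.drop (i + 1)).take (n - 1) := by
      simp only [hwin]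
      rw [List.drop_eq_getElem_cons h1, show n = (n - 1) + 1 by omega,
        List.take_succ_cons]
      simp
    have hidx : ∀ (a b : Nat) (ha : a < v.length) (hb : b < v.length), a = b →
        v[a] = v[b] := by
      intro a b ha hb h
      subst h
      rfl
    have hlt : n - 1 < (v.drop (i + 1)).length := by
      simp [List.length_drop]; omega
    have h3 : (i + 1) + (n - 1) < v.length := by omega
    have e2 : win (i + 1) = (v.drop (i + 1)).take (n - 1) ++ [v[i + n]] := by
      calc win (i + 1) = (v.drop (i + 1)).take n := rfl
        _ = (v.drop (i + 1)).take ((n - 1) + 1) := by congr 1; omega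
        _ = (v.drop (i + 1)).take (n - 1) ++ [v[(i + 1) + (n - 1)]] := by
            rw [List.take_succ, List.getElem?_eq_getElem hlt]
            simp [List.getElem_drop]
        _ = (v.drop (i + 1)).take (n - 1) ++ [v[i + n]] := by
            rw [hidx ((i + 1) + (n - 1)) (i + n) h3 h2 (by omega)]
    have p1 := perm_range' hpi
    have p2 := perm_range' hpi1
    rw [e1] at p1
    rw [e2] at p2
    exact cons_perm_cons_eq
      (p1.trans (p2.symm.trans (List.perm_append_singleton _ _)))
  -- window 0 equals window n
  have hwn : win 0 = win n := by
    apply List.ext_getElem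
    · simp only [hwin]
      simp [List.length_take, List.length_drop]
      omega
    · intro j hj1 hj2
      have hjn : j < n := by
        simp only [hwin] at hj1
        simp [List.length_take, List.length_drop] at hj1
        omega
      simp only [hwin, List.getElem_take, List.getElem_drop]
      have := hper j (by omega) (by omega) (by omega)
      simpa [Nat.add_comm] using this
  -- contradiction
  have h0 : (0 : Nat) ∈ S.image g := by rw [himg]; exact Finset.mem_range.2 (by omega)
  have hnI : n ∈ S.image g := by rw [himg]; exact Finset.mem_range.2 hNn
  simp only [Finset.mem_image] at h0 hnI
  obtain ⟨p0, hp0, hgp0⟩ := h0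
  obtain ⟨pn, hpn, hgpn⟩ := hnI
  have e0 : p0 = win 0 := by rw [← hgp0, (hg1 p0 ((hSmem p0).1 hp0)).2]
  have en : pn = win n := by rw [← hgpn, (hg1 pn ((hSmem pn).1 hpn)).2]
  have : p0 = pn := by rw [e0, en, hwn]
  rw [this] at hgp0
  omega
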